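/- Consider a linearization process on a finite set V with injective h : V → ℝ, where in each step an edge (u,w) with h(u) < h(w) and some node v with h(u) < h(v) < h(w) adjacent to u is replaced according to delegation (u keeps the closer of v,w and an edge from the closer to the farther is added). Define the range of an undirected path p as max_{v∈p} h(v) − min_{v∈p} h(v). Then for consecutive nodes x, y in the sorted order (no node has h-value strictly between them), any connecting path of positive range can eventually be replaced by a connecting path of strictly smaller range; consequently the process terminates with the edge (x,y) present, i.e., the sorted list is formed. -/

import Mathlib

/-- Undirected adjacency induced by a directed edge set. -/
def adjE {V : Type*} (E : Set (V × V)) (a b : V) : Prop := (a, b) ∈ E ∨ (b, a) ∈ E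

/-- `l` is an undirected path from `x` to `y` in the edge set `E`. -/
def IsPath {V : Type*} (E : Set (V × V)) (x y : V) (l : List V) : Prop :=
  l.head? = some x ∧ l.getLast? = some y ∧ l.Chain' (adjE E)

/-- The range of a path: the difference between the largest and the smallest
position of a node on it. -/
noncomputable def pathRange {V : Type*} (h : V → ℝ) (l : List V) : ℝ :=
  sSup (h '' {v | v ∈ l}) - sInf (h '' {v | v ∈ l})

/-- One delegation step of the linearization process: a node `u` knowing both
`v` and `w` with `h(v)` strictly between `h(u)` and `h(w)` delegates `w` to
`v`: the edge `(u,w)` is replaced by the edge `(v,w)`. -/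
def Step {V : Type*} (h : V → ℝ) (E E' : Set (V × V)) : Prop :=
  (∃ u v w : V, adjE E u v ∧ adjE E u w ∧ h u < h v ∧ h v < h w ∧
    E' = insert (v, w) (E \ {(u, w), (w, u)})) ∨
  (∃ u v w : V, adjE E u v ∧ adjE E u w ∧ h w < h v ∧ h v < h u ∧
    E' = insert (v, w) (E \ {(u, w), (w, u)}))

namespace LinAux

open List

variable {V : Type*}

theorem adjE_symm {E : Set (V × V)} {a b : V} (h : adjE E a b) : adjE E b a := h.symm

theorem chain'_imp_mem {R S : V → V → Prop} :
    ∀ {l : List V}, l.Chain' R → (∀ p ∈ l, ∀ q ∈ l, R p q → S p q) → l.Chain' S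
  | [], _, _ => List.isChain_nil
  | [_], _, _ => List.isChain_singleton _
  | a :: b :: l, hc, himp => by
    simp only [List.Chain'] at hc ⊢
    rw [List.isChain_cons_cons] at hc ⊢
    refine ⟨himp _ (by simp) _ (by simp) hc.1, chain'_imp_mem hc.2 ?_⟩
    exact fun p hp q hq hr => himp p (List.mem_cons_of_mem _ hp) q (List.mem_cons_of_mem _ hq) hr

theorem interior_split :
    ∀ (l : List V) (u : V), u ∈ l → l.head? ≠ some u → l.getLast? ≠ some u →
      ∃ s a b t, l = s ++ a :: u :: b :: t := by
  intro l
  induction l with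
  | nil => simp
  | cons c rest ih =>
    intro u hu hh hl
    have hcu : c ≠ u := fun e => hh (by simp [e])
    have hur : u ∈ rest := by
      rcases List.mem_cons.1 hu with rfl | hr
      · exact absurd rfl hcu.symm
      · exact hr
    cases rest with
    | nil => simp at hur
    | cons d t' =>
      by_cases hdu : d = u
      · subst hdu
        cases t' with
        | nil => exact absurd (by simp) hl
        | cons e t'' => exact ⟨[], c, e, t'', by simp⟩
      · have hl' : (d :: t').getLast? ≠ some u := by
          rwa [List.getLast?_cons_cons] at hl
        obtain ⟨s, a, b, t, heq⟩ := ih u hur (by simp [hdu]) hl'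
        exact ⟨c :: s, a, b, t, by simp [heq]⟩

theorem sub2_split :
    ∀ {l : List V} {v : V}, [v, v] <+ l → ∃ s m t, l = s ++ v :: m ++ v :: t := by
  intro l
  induction l with
  | nil => intro v hv; exact absurd (List.eq_nil_of_sublist_nil hv) (by simp)
  | cons a l ih =>
    intro v hv
    cases hv with
    | cons _ h =>
      obtain ⟨s, m, t, rfl⟩ := ih h
      exact ⟨a :: s, m, t, rfl⟩
    | cons_cons _ h =>
      obtain ⟨m, t, rfl⟩ := List.append_of_mem (List.singleton_sublist.1 h)
      exact ⟨[], m, t, rfl⟩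

theorem splice_isPath {E : Set (V × V)} {x y : V} {s m t : List V} {v : V}
    (hp : IsPath E x y (s ++ v :: m ++ v :: t)) : IsPath E x y (s ++ v :: t) := by
  obtain ⟨hh, hl, hc⟩ := hp
  refine ⟨?_, ?_, ?_⟩
  · cases s with
    | nil => simpa using hh
    | cons c s' => simpa using hh
  · rw [List.getLast?_append_cons] at hl ⊢
    simpa using hl
  · have hrw : s ++ v :: m ++ v :: t = (s ++ [v]) ++ (m ++ v :: t) := by simp
    rw [hrw] at hc
    obtain ⟨hc1, hc2, _⟩ := List.isChain_append.1 hc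
    have hcv : (v :: t).Chain' (adjE E) := hc2.suffix (List.suffix_append m (v :: t))
    have hrw2 : s ++ v :: t = (s ++ [v]) ++ t := by simp
    rw [hrw2]
    refine List.isChain_append.2 ⟨hc1, hcv.tail, ?_⟩
    intro p hp' q hq'
    have hpv : v = p := by
      rw [List.getLast?_append_cons] at hp'; simpa using hp'
    subst hpv
    exact (List.isChain_cons.1 hcv).1 q hq'

theorem exists_nodup_path {E : Set (V × V)} {x y : V} :
    ∀ (n : ℕ) (l : List V), l.length ≤ n → IsPath E x y l →
      ∃ l', IsPath E x y l' ∧ l'.Nodup ∧ ∀ z ∈ l', z ∈ l := by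
  intro n
  induction n with
  | zero =>
    intro l hlen hp
    have : l = [] := List.length_eq_zero_iff.1 (Nat.le_zero.1 hlen)
    subst this
    simp [IsPath] at hp
  | succ n ih =>
    intro l hlen hp
    by_cases hnd : l.Nodup
    · exact ⟨l, hp, hnd, fun _ hz => hz⟩
    · obtain ⟨v, hv⟩ := List.exists_duplicate_iff_not_nodup.2 hnd
      obtain ⟨s, m, t, rfl⟩ := sub2_split (List.duplicate_iff_sublist.1 hv)
      have hlen' : (s ++ v :: t).length ≤ n := by
        simp only [List.length_append, List.length_cons] at hlen ⊢
        omega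
      obtain ⟨l', h1, h2, h3⟩ := ih _ hlen' (splice_isPath hp)
      refine ⟨l', h1, h2, fun z hz => ?_⟩
      have := h3 z hz
      simp only [List.mem_append, List.mem_cons] at this ⊢
      tauto

theorem pathRange_mono (h : V → ℝ) {l l' : List V} {z0 : V} (hz0 : z0 ∈ l')
    (hsub : ∀ z ∈ l', z ∈ l) : pathRange h l' ≤ pathRange h l := by
  have hfin : (h '' {v | v ∈ l}).Finite := (l.finite_toSet).image h
  have hne' : (h '' {v | v ∈ l'}).Nonempty := ⟨h z0, ⟨z0, hz0, rfl⟩⟩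
  have hss : h '' {v | v ∈ l'} ⊆ h '' {v | v ∈ l} :=
    Set.image_mono (fun z hz => hsub z hz)
  have h1 : sSup (h '' {v | v ∈ l'}) ≤ sSup (h '' {v | v ∈ l}) :=
    csSup_le_csSup hfin.bddAbove hne' hss
  have h2 : sInf (h '' {v | v ∈ l}) ≤ sInf (h '' {v | v ∈ l'}) :=
    csInf_le_csInf hfin.bddBelow hne' hss
  unfold pathRange
  linarith

theorem adjE_step_keep {E : Set (V × V)} {u c : V} (v w : V) {p q : V}
    (hp : p ≠ u) (hq : q ≠ u) (hadj : adjE E p q) :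
    adjE (insert (v, w) (E \ {(u, c), (c, u)})) p q := by
  rcases hadj with hm | hm
  · exact Or.inl (Set.mem_insert_iff.2 (Or.inr ⟨hm, by
      simp only [Set.mem_insert_iff, Set.mem_singleton_iff, Prod.mk.injEq, not_or]
      exact ⟨fun ⟨e1, _⟩ => hp e1, fun ⟨_, e2⟩ => hq e2⟩⟩))
  · exact Or.inr (Set.mem_insert_iff.2 (Or.inr ⟨hm, by
      simp only [Set.mem_insert_iff, Set.mem_singleton_iff, Prod.mk.injEq, not_or]
      exact ⟨fun ⟨e1, _⟩ => hq e1, fun ⟨_, e2⟩ => hp e2⟩⟩))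

theorem rebuild {E E' : Set (V × V)} {x y : V} {s t : List V} {a u b : V}
    (hp : IsPath E x y (s ++ a :: u :: b :: t))
    (hupg : ∀ p q : V, p ≠ u → q ≠ u → adjE E p q → adjE E' p q)
    (hab : adjE E' a b)
    (huL1 : u ∉ s ++ [a]) (huL2 : u ∉ b :: t) :
    IsPath E' x y (s ++ a :: b :: t) := by
  obtain ⟨hh, hl, hc⟩ := hp
  refine ⟨?_, ?_, ?_⟩
  · cases s with
    | nil => simpa using hh
    | cons c s' => simpa using hh
  · rw [List.getLast?_append_cons] at hl ⊢
    simpa [List.getLast?_cons_cons] using hl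
  · have hrw : s ++ a :: u :: b :: t = (s ++ [a]) ++ u :: (b :: t) := by simp
    rw [hrw] at hc
    obtain ⟨hc1, hc2, _⟩ := List.isChain_append.1 hc
    have hcb : (b :: t).Chain' (adjE E) := hc2.tail
    have hrw2 : s ++ a :: b :: t = (s ++ [a]) ++ (b :: t) := by simp
    rw [hrw2]
    refine List.isChain_append.2 ⟨?_, ?_, ?_⟩
    · exact chain'_imp_mem hc1 (fun p hp' q hq' hr =>
        hupg p q (fun e => huL1 (e ▸ hp')) (fun e => huL1 (e ▸ hq')) hr)
    · exact chain'_imp_mem hcb (fun p hp' q hq' hr =>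
        hupg p q (fun e => huL2 (e ▸ hp')) (fun e => huL2 (e ▸ hq')) hr)
    · intro p hp' q hq'
      have hpa : a = p := by
        rw [List.getLast?_append_cons] at hp'; simpa using hp'
      have hqb : b = q := by simpa using hq'
      subst hpa; subst hqb; exact hab

theorem after_step (h : V → ℝ) {E : Set (V × V)} {x y : V} {s t : List V} {a u b v w : V}
    (hp : IsPath E x y (s ++ a :: u :: b :: t)) (hnd : (s ++ a :: u :: b :: t).Nodup)
    (hvw : (v, w) = (a, b) ∨ (v, w) = (b, a)) :
    IsPath (insert (v, w) (E \ {(u, w), (w, u)})) x y (s ++ a :: b :: t) ∧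
      (s ++ a :: b :: t).Nodup ∧
      (s ++ a :: b :: t).length < (s ++ a :: u :: b :: t).length ∧
      pathRange h (s ++ a :: b :: t) ≤ pathRange h (s ++ a :: u :: b :: t) := by
  have hrw : s ++ a :: u :: b :: t = (s ++ [a]) ++ u :: (b :: t) := by simp
  have hnd' : ((s ++ [a]) ++ u :: (b :: t)).Nodup := hrw ▸ hnd
  obtain ⟨hndL1, hndU, hdisj⟩ := List.nodup_append.1 hnd'
  have huL1 : u ∉ s ++ [a] := fun hm => hdisj u hm u (by simp) rfl
  have huL2 : u ∉ b :: t := (List.nodup_cons.1 hndU).1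
  have hsub : s ++ a :: b :: t <+ s ++ a :: u :: b :: t :=
    (List.Sublist.cons₂ a (List.sublist_cons_self u (b :: t))).append_left s
  have hab : adjE (insert (v, w) (E \ {(u, w), (w, u)})) a b := by
    rcases hvw with he | he
    · obtain ⟨rfl, rfl⟩ := Prod.ext_iff.1 he
      exact Or.inl (Set.mem_insert _ _)
    · obtain ⟨rfl, rfl⟩ := Prod.ext_iff.1 he
      exact Or.inr (Set.mem_insert _ _)
  refine ⟨rebuild hp (fun p q hpne hqne hadj => adjE_step_keep v w hpne hqne hadj)
      hab huL1 huL2, hnd.sublist hsub, by simp, ?_⟩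
  exact pathRange_mono h (show a ∈ s ++ a :: b :: t by simp) (fun z hz => hsub.subset hz)

theorem step_lemma {x y : V} (h : V → ℝ) (hinj : Function.Injective h)
    (hxy : h x < h y) {E : Set (V × V)} {l : List V}
    (hnd : l.Nodup) (hp : IsPath E x y l)
    (hrange : h y - h x < pathRange h l) :
    ∃ (E' : Set (V × V)) (l' : List V), Step h E E' ∧ IsPath E' x y l' ∧
      l'.Nodup ∧ l'.length < l.length ∧ pathRange h l' ≤ pathRange h l := by
  have hfin : (h '' {v | v ∈ l}).Finite := (l.finite_toSet).image h
  have hxl : x ∈ l := List.mem_of_mem_head? (by rw [hp.1]; rfl)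
  have hyl : y ∈ l := List.mem_of_mem_getLast? (by rw [hp.2.1]; rfl)
  have hne : (h '' {v | v ∈ l}).Nonempty := ⟨h x, ⟨x, hxl, rfl⟩⟩
  have hsup_y : h y ≤ sSup (h '' {v | v ∈ l}) := le_csSup hfin.bddAbove ⟨y, hyl, rfl⟩
  have hinf_x : sInf (h '' {v | v ∈ l}) ≤ h x := csInf_le hfin.bddBelow ⟨x, hxl, rfl⟩
  have key : h y < sSup (h '' {v | v ∈ l}) ∨ sInf (h '' {v | v ∈ l}) < h x := by
    by_contra hcon
    push_neg at hcon
    have : pathRange h l ≤ h y - h x := by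
      unfold pathRange; linarith [hcon.1, hcon.2]
    linarith
  rcases key with hkey | hkey
  · -- a maximal node above y exists
    obtain ⟨u, hul, huv⟩ := hne.csSup_mem hfin
    have huy : h y < h u := by rw [huv]; exact hkey
    have hux : u ≠ x := fun e => by rw [e] at huy; linarith
    have huyne : u ≠ y := fun e => by rw [e] at huy; linarith
    obtain ⟨s, a, b, t, rfl⟩ := interior_split l u hul
      (by rw [hp.1]; exact fun e => (Ne.symm hux) (Option.some.inj e))
      (by rw [hp.2.1]; exact fun e => (Ne.symm huyne) (Option.some.inj e))
    have ha_le : h a ≤ h u := by rw [huv]; exact le_csSup hfin.bddAbove ⟨a, by simp, rfl⟩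
    have hb_le : h b ≤ h u := by rw [huv]; exact le_csSup hfin.bddAbove ⟨b, by simp, rfl⟩
    -- nodup facts
    have hrw : s ++ a :: u :: b :: t = (s ++ [a]) ++ u :: (b :: t) := by simp
    have hnd' : ((s ++ [a]) ++ u :: (b :: t)).Nodup := hrw ▸ hnd
    obtain ⟨hndL1, hndU, hdisj⟩ := List.nodup_append.1 hnd'
    have huL1 : u ∉ s ++ [a] := fun hm => hdisj u hm u (by simp) rfl
    have ha_ne_u : a ≠ u := fun e => huL1 (e ▸ (by simp : a ∈ s ++ [a]))
    have hb_ne_u : b ≠ u := fun e => (List.nodup_cons.1 hndU).1 (e ▸ (by simp : b ∈ b :: t))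
    have hab_ne : a ≠ b := fun e => hdisj a (show a ∈ s ++ [a] by simp) a (by simp [e]) rfl
    have ha_lt : h a < h u := lt_of_le_of_ne ha_le (fun e => ha_ne_u (hinj e))
    have hb_lt : h b < h u := lt_of_le_of_ne hb_le (fun e => hb_ne_u (hinj e))
    -- chain facts
    have hc' : List.Chain' (adjE E) ((s ++ [a]) ++ u :: (b :: t)) := hrw ▸ hp.2.2
    obtain ⟨hc1, hc2, hlink⟩ := List.isChain_append.1 hc'
    have hau : adjE E a u := hlink a (by rw [List.getLast?_append_cons]; simp) u rfl
    have hub : adjE E u b := (List.isChain_cons.1 hc2).1 b rfl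
    rcases lt_or_gt_of_ne (fun e => hab_ne (hinj e) : h a ≠ h b) with hlab | hlab
    · obtain ⟨h1, h2, h3, h4⟩ := after_step h (v := b) (w := a) hp hnd (Or.inr rfl)
      exact ⟨_, _, Or.inr ⟨u, b, a, hub, adjE_symm hau, hlab, hb_lt, rfl⟩, h1, h2, h3, h4⟩
    · obtain ⟨h1, h2, h3, h4⟩ := after_step h (v := a) (w := b) hp hnd (Or.inl rfl)
      exact ⟨_, _, Or.inr ⟨u, a, b, adjE_symm hau, hub, hlab, ha_lt, rfl⟩, h1, h2, h3, h4⟩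
  · -- a minimal node below x exists
    obtain ⟨u, hul, huv⟩ := hne.csInf_mem hfin
    have huy : h u < h x := by rw [huv]; exact hkey
    have hux : u ≠ x := fun e => by rw [e] at huy; linarith
    have huyne : u ≠ y := fun e => by rw [e] at huy; linarith
    obtain ⟨s, a, b, t, rfl⟩ := interior_split l u hul
      (by rw [hp.1]; exact fun e => (Ne.symm hux) (Option.some.inj e))
      (by rw [hp.2.1]; exact fun e => (Ne.symm huyne) (Option.some.inj e))
    have ha_le : h u ≤ h a := by rw [huv]; exact csInf_le hfin.bddBelow ⟨a, by simp, rfl⟩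
    have hb_le : h u ≤ h b := by rw [huv]; exact csInf_le hfin.bddBelow ⟨b, by simp, rfl⟩
    have hrw : s ++ a :: u :: b :: t = (s ++ [a]) ++ u :: (b :: t) := by simp
    have hnd' : ((s ++ [a]) ++ u :: (b :: t)).Nodup := hrw ▸ hnd
    obtain ⟨hndL1, hndU, hdisj⟩ := List.nodup_append.1 hnd'
    have huL1 : u ∉ s ++ [a] := fun hm => hdisj u hm u (by simp) rfl
    have ha_ne_u : a ≠ u := fun e => huL1 (e ▸ (by simp : a ∈ s ++ [a]))
    have hb_ne_u : b ≠ u := fun e => (List.nodup_cons.1 hndU).1 (e ▸ (by simp : b ∈ b :: t))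
    have hab_ne : a ≠ b := fun e => hdisj a (show a ∈ s ++ [a] by simp) a (by simp [e]) rfl
    have ha_lt : h u < h a := lt_of_le_of_ne ha_le (fun e => ha_ne_u (hinj e.symm))
    have hb_lt : h u < h b := lt_of_le_of_ne hb_le (fun e => hb_ne_u (hinj e.symm))
    have hc' : List.Chain' (adjE E) ((s ++ [a]) ++ u :: (b :: t)) := hrw ▸ hp.2.2
    obtain ⟨hc1, hc2, hlink⟩ := List.isChain_append.1 hc'
    have hau : adjE E a u := hlink a (by rw [List.getLast?_append_cons]; simp) u rfl
    have hub : adjE E u b := (List.isChain_cons.1 hc2).1 b rfl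
    rcases lt_or_gt_of_ne (fun e => hab_ne (hinj e) : h a ≠ h b) with hlab | hlab
    · obtain ⟨h1, h2, h3, h4⟩ := after_step h (v := a) (w := b) hp hnd (Or.inl rfl)
      exact ⟨_, _, Or.inl ⟨u, a, b, adjE_symm hau, hub, ha_lt, hlab, rfl⟩, h1, h2, h3, h4⟩
    · obtain ⟨h1, h2, h3, h4⟩ := after_step h (v := b) (w := a) hp hnd (Or.inr rfl)
      exact ⟨_, _, Or.inl ⟨u, b, a, hub, adjE_symm hau, hb_lt, hlab, rfl⟩, h1, h2, h3, h4⟩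

theorem extract_edge {E : Set (V × V)} {x y : V} (hne : x ≠ y) :
    ∀ l : List V, l.head? = some x → l.getLast? = some y → l.Chain' (adjE E) →
      (∀ v ∈ l, v = x ∨ v = y) → adjE E x y := by
  intro l
  induction l with
  | nil => simp
  | cons c rest ih =>
    intro hh hl hc hall
    have hcx : c = x := by simpa using hh
    subst hcx
    cases rest with
    | nil =>
      have : c = y := by simpa using hl
      exact absurd this hne
    | cons d t =>
      have hcd : adjE E c d := (List.isChain_cons_cons.1 hc).1
      rcases hall d (by simp) with rfl | rfl
      · exact ih (by simp) (by simpa [List.getLast?_cons_cons] using hl)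
          (List.isChain_cons_cons.1 hc).2 (fun v hv => hall v (List.mem_cons_of_mem _ hv))
      · exact hcd

theorem main {x y : V} (h : V → ℝ) (hinj : Function.Injective h)
    (hxy : h x < h y) (hconsec : ∀ z : V, ¬(h x < h z ∧ h z < h y)) :
    ∀ (n : ℕ) (E : Set (V × V)) (l : List V), l.length ≤ n → l.Nodup → IsPath E x y l →
      ((h y - h x < pathRange h l →
        ∃ (E' : Set (V × V)) (l' : List V),
          Relation.ReflTransGen (Step h) E E' ∧ IsPath E' x y l' ∧
            pathRange h l' < pathRange h l) ∧
      (∃ E'' : Set (V × V),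
        Relation.ReflTransGen (Step h) E E'' ∧ ((x, y) ∈ E'' ∨ (y, x) ∈ E''))) := by
  intro n
  induction n with
  | zero =>
    intro E l hlen hnd hp
    have : l = [] := List.length_eq_zero_iff.1 (Nat.le_zero.1 hlen)
    subst this
    simp [IsPath] at hp
  | succ n ih =>
    intro E l hlen hnd hp
    rcases le_or_gt (pathRange h l) (h y - h x) with hsmall | hbig
    · -- terminal case : all nodes on l are x or y
      have hfin : (h '' {v | v ∈ l}).Finite := (l.finite_toSet).image h
      have hxl : x ∈ l := List.mem_of_mem_head? (by rw [hp.1]; rfl)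
      have hyl : y ∈ l := List.mem_of_mem_getLast? (by rw [hp.2.1]; rfl)
      have hsup_y : h y ≤ sSup (h '' {v | v ∈ l}) := le_csSup hfin.bddAbove ⟨y, hyl, rfl⟩
      have hinf_x : sInf (h '' {v | v ∈ l}) ≤ h x := csInf_le hfin.bddBelow ⟨x, hxl, rfl⟩
      have hall : ∀ v ∈ l, v = x ∨ v = y := by
        intro v hv
        have h1 : h v ≤ sSup (h '' {v | v ∈ l}) := le_csSup hfin.bddAbove ⟨v, hv, rfl⟩
        have h2 : sInf (h '' {v | v ∈ l}) ≤ h v := csInf_le hfin.bddBelow ⟨v, hv, rfl⟩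
        have hR : pathRange h l = sSup (h '' {v | v ∈ l}) - sInf (h '' {v | v ∈ l}) := rfl
        have hvx : h x ≤ h v := by rw [hR] at hsmall; linarith
        have hvy : h v ≤ h y := by rw [hR] at hsmall; linarith
        rcases eq_or_lt_of_le hvx with he | hlt
        · exact Or.inl (hinj he.symm)
        · rcases eq_or_lt_of_le hvy with he | hlt'
          · exact Or.inr (hinj he)
          · exact absurd ⟨hlt, hlt'⟩ (hconsec v)
      have hedge : adjE E x y :=
        extract_edge (fun e => by rw [e] at hxy; linarith) l hp.1 hp.2.1 hp.2.2 hall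
      exact ⟨fun hgt => absurd hgt (not_lt.2 hsmall),
        ⟨E, Relation.ReflTransGen.refl, hedge⟩⟩
    · obtain ⟨E₁, l₁, hstep, hp₁, hnd₁, hlt, hle⟩ := step_lemma h hinj hxy hnd hp hbig
      have hlen₁ : l₁.length ≤ n := by omega
      obtain ⟨ih1, ih2⟩ := ih E₁ l₁ hlen₁ hnd₁ hp₁
      constructor
      · intro _
        rcases lt_or_eq_of_le hle with hlt' | heq
        · exact ⟨E₁, l₁, Relation.ReflTransGen.single hstep, hp₁, hlt'⟩
        · obtain ⟨E', l', hrel, hp', hr⟩ := ih1 (heq ▸ hbig)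
          exact ⟨E', l', Relation.ReflTransGen.head hstep hrel, hp', heq ▸ hr⟩
      · obtain ⟨E'', hrel, he⟩ := ih2
        exact ⟨E'', Relation.ReflTransGen.head hstep hrel, he⟩

end LinAux

theorem linearization_range_decreases {V : Type*} [Fintype V]
    (h : V → ℝ) (hinj : Function.Injective h)
    (x y : V) (hxy : h x < h y)
    (hconsec : ∀ z : V, ¬(h x < h z ∧ h z < h y))
    (E : Set (V × V)) (l : List V) (hl : IsPath E x y l) :
    (h y - h x < pathRange h l →
      ∃ (E' : Set (V × V)) (l' : List V),
        Relation.ReflTransGen (Step h) E E' ∧ IsPath E' x y l' ∧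
          pathRange h l' < pathRange h l) ∧
    (∃ E'' : Set (V × V),
      Relation.ReflTransGen (Step h) E E'' ∧ ((x, y) ∈ E'' ∨ (y, x) ∈ E'')) := by
  obtain ⟨l₀, hp₀, hnd₀, hsub₀⟩ := LinAux.exists_nodup_path l.length l le_rfl hl
  have hxl₀ : x ∈ l₀ := List.mem_of_mem_head? (by rw [hp₀.1]; rfl)
  have hmono : pathRange h l₀ ≤ pathRange h l := LinAux.pathRange_mono h hxl₀ hsub₀
  obtain ⟨P1, P2⟩ := LinAux.main h hinj hxy hconsec l₀.length E l₀ le_rfl hnd₀ hp₀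
  constructor
  · intro hr
    rcases lt_or_ge (pathRange h l₀) (pathRange h l) with hlt | hge
    · exact ⟨E, l₀, Relation.ReflTransGen.refl, hp₀, hlt⟩
    · have heq : pathRange h l₀ = pathRange h l := le_antisymm hmono hge
      obtain ⟨E', l', hrel, hp', hr'⟩ := P1 (heq ▸ hr)
      exact ⟨E', l', hrel, hp', heq ▸ hr'⟩
  · exact P2
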